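/- Let $k$ be a field of characteristic different from $2$, let $V$ be a finite-dimensional $k$-vector space, and let $u_1,v_1,w_1$ and $u_2,v_2,w_2$ be linear forms on $V$ with $w_1(x)^{2} - u_1(x)v_1(x) = w_2(x)^{2} - u_2(x)v_2(x)$ for all $x \in V$. Suppose moreover that $u_1, v_1, w_1$ are linearly independent in the dual space of $V$. Then there exists a $3\times 3$ matrix $A = (A_{ij})$ over $k$ with $A^{*}\Omega A = \Omega$ such that $u_2 = A_{00}u_1 + A_{01}v_1 + A_{02}w_1$, $v_2 = A_{10}u_1 + A_{11}v_1 + A_{12}w_1$, and $w_2 = A_{20}u_1 + A_{21}v_1 + A_{22}w_1$. -/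

import Mathlib

open Matrix

/-- The symmetric matrix Ω with rows (0,-1/2,0), (-1/2,0,0), (0,0,1). -/
def Omega (k : Type*) [Field k] : Matrix (Fin 3) (Fin 3) k :=
  !![0, -(1/2), 0; -(1/2), 0, 0; 0, 0, 1]

/-- If `w₁² - u₁v₁ = w₂² - u₂v₂` as quadratic forms and `u₁, v₁, w₁` are
linearly independent, then there is a matrix `A ∈ O₃(Ω)` taking the column
triple `(u₁,v₁,w₁)` to `(u₂,v₂,w₂)`. -/
theorem exists_O3_matrix_of_rank_three {k V : Type*} [Field k] [AddCommGroup V]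
    [Module k V] [FiniteDimensional k V] (h2 : (2 : k) ≠ 0)
    (u₁ v₁ w₁ u₂ v₂ w₂ : V →ₗ[k] k)
    (heq : ∀ x : V, w₁ x ^ 2 - u₁ x * v₁ x = w₂ x ^ 2 - u₂ x * v₂ x)
    (hli : LinearIndependent k ![u₁, v₁, w₁]) :
    ∃ A : Matrix (Fin 3) (Fin 3) k, Aᵀ * Omega k * A = Omega k ∧
      u₂ = A 0 0 • u₁ + A 0 1 • v₁ + A 0 2 • w₁ ∧
      v₂ = A 1 0 • u₁ + A 1 1 • v₁ + A 1 2 • w₁ ∧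
      w₂ = A 2 0 • u₁ + A 2 1 • v₁ + A 2 2 • w₁ := by
  classical
  set φ : V →ₗ[k] (Fin 3 → k) := LinearMap.pi ![u₁, v₁, w₁] with hφdef
  have hsurj : Function.Surjective φ := by
    rw [← LinearMap.range_eq_top]
    by_contra hne
    obtain ⟨f, hf0, hfbot⟩ := Submodule.exists_dual_map_eq_bot_of_lt_top
      (p := LinearMap.range φ) (lt_top_iff_ne_top.mpr hne) inferInstance
    have hker : ∀ x : V, f (φ x) = 0 := fun x => by
      have hx : f (φ x) ∈ Submodule.map f (LinearMap.range φ) :=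
        Submodule.mem_map_of_mem (LinearMap.mem_range_self φ x)
      rw [hfbot] at hx; exact (Submodule.mem_bot _).mp hx
    have hsum : ∑ i : Fin 3, (fun i : Fin 3 => f (fun j => if i = j then (1:k) else 0)) i
        • ![u₁, v₁, w₁] i = 0 := by
      apply LinearMap.ext
      intro x
      have hx := hker x
      rw [LinearMap.pi_apply_eq_sum_univ f (φ x)] at hx
      simp only [Fin.sum_univ_three, smul_eq_mul, hφdef, LinearMap.pi_apply,
        Matrix.cons_val_zero, Matrix.cons_val_one, Matrix.head_cons] at hx
      simp only [Fin.sum_univ_three, LinearMap.add_apply, LinearMap.smul_apply,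
        smul_eq_mul, LinearMap.zero_apply, Matrix.cons_val_zero, Matrix.cons_val_one,
        Matrix.head_cons]
      -- need cons_val_two for index 2
      linear_combination hx
    have hcoef := Fintype.linearIndependent_iff.mp hli _ hsum
    apply hf0
    apply LinearMap.ext
    intro g
    rw [LinearMap.pi_apply_eq_sum_univ f g]
    simp only [Fin.sum_univ_three, hcoef 0, hcoef 1, hcoef 2, smul_zero, add_zero, zero_add]
    rfl
  obtain ⟨y0, hy0⟩ := hsurj (Pi.single 0 1)
  obtain ⟨y1, hy1⟩ := hsurj (Pi.single 1 1)
  obtain ⟨y2, hy2⟩ := hsurj (Pi.single 2 1)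
  have hu0 : u₁ y0 = 1 := by simpa [hφdef, Pi.single_apply] using congrFun hy0 0
  have hv0 : v₁ y0 = 0 := by simpa [hφdef, Pi.single_apply] using congrFun hy0 1
  have hw0 : w₁ y0 = 0 := by simpa [hφdef, Pi.single_apply] using congrFun hy0 2
  have hu1 : u₁ y1 = 0 := by simpa [hφdef, Pi.single_apply] using congrFun hy1 0
  have hv1 : v₁ y1 = 1 := by simpa [hφdef, Pi.single_apply] using congrFun hy1 1
  have hw1 : w₁ y1 = 0 := by simpa [hφdef, Pi.single_apply] using congrFun hy1 2
  have hu2' : u₁ y2 = 0 := by simpa [hφdef, Pi.single_apply] using congrFun hy2 0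
  have hv2' : v₁ y2 = 0 := by simpa [hφdef, Pi.single_apply] using congrFun hy2 1
  have hw2' : w₁ y2 = 1 := by simpa [hφdef, Pi.single_apply] using congrFun hy2 2
  -- the quadratic form vanishes appropriately at y0, y1 and y0+y1
  have hq1 : w₂ y0 ^ 2 = u₂ y0 * v₂ y0 := by
    have h := heq y0; rw [hu0, hv0, hw0] at h; linear_combination -h
  have hq2 : w₂ y1 ^ 2 = u₂ y1 * v₂ y1 := by
    have h := heq y1; rw [hu1, hv1, hw1] at h; linear_combination -h
  have hq12 : (w₂ y0 + w₂ y1) ^ 2 - (u₂ y0 + u₂ y1) * (v₂ y0 + v₂ y1) = -1 := by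
    have h := heq (y0 + y1)
    simp only [map_add, hu0, hv0, hw0, hu1, hv1, hw1] at h
    linear_combination -h
  -- the radical of the quadratic form kills u₂, v₂, w₂
  have hK : ∀ x : V, u₁ x = 0 → v₁ x = 0 → w₁ x = 0 →
      u₂ x = 0 ∧ v₂ x = 0 ∧ w₂ x = 0 := by
    intro x hu hv hw
    have hx0 : w₂ x ^ 2 = u₂ x * v₂ x := by
      have h := heq x; rw [hu, hv, hw] at h; linear_combination -h
    have hstar : ∀ z : V, 2 * w₂ x * w₂ z = u₂ x * v₂ z + v₂ x * u₂ z := by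
      intro z
      have h1 := heq (x + z)
      have hz := heq z
      simp only [map_add, hu, hv, hw, zero_add] at h1
      linear_combination hz - h1 - hx0
    have hst1 := hstar y0
    have hst2 := hstar y1
    have hl1 : u₂ x * v₂ y0 - v₂ x * u₂ y0 = 0 := by
      apply sq_eq_zero_iff.mp
      linear_combination (-(2 * w₂ x * w₂ y0 + u₂ x * v₂ y0 + v₂ x * u₂ y0)) * hst1
        + 4 * w₂ y0 ^ 2 * hx0 + 4 * u₂ x * v₂ x * hq1
    have hl2 : u₂ x * v₂ y1 - v₂ x * u₂ y1 = 0 := by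
      apply sq_eq_zero_iff.mp
      linear_combination (-(2 * w₂ x * w₂ y1 + u₂ x * v₂ y1 + v₂ x * u₂ y1)) * hst2
        + 4 * w₂ y1 ^ 2 * hx0 + 4 * u₂ x * v₂ x * hq2
    have hγ0 : w₂ x = 0 := by
      have h4 : (2 * w₂ x) ^ 2 = 0 := by
        linear_combination (4 * w₂ x ^ 2) * hq12
          - (2 * w₂ x * (w₂ y0 + w₂ y1) + u₂ x * (v₂ y0 + v₂ y1)
              + v₂ x * (u₂ y0 + u₂ y1)) * (hst1 + hst2)
          + 4 * (u₂ y0 + u₂ y1) * (v₂ y0 + v₂ y1) * hx0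
          - (u₂ x * (v₂ y0 + v₂ y1) - v₂ x * (u₂ y0 + u₂ y1)) * (hl1 + hl2)
      have := sq_eq_zero_iff.mp h4
      rcases mul_eq_zero.mp this with h | h
      · exact absurd h h2
      · exact h
    have hαβ : u₂ x * v₂ x = 0 := by
      linear_combination w₂ x * hγ0 - hx0
    rcases mul_eq_zero.mp hαβ with hα | hβ
    · by_cases hβ : v₂ x = 0
      · exact ⟨hα, hβ, hγ0⟩
      · exfalso
        have hs1 : u₂ y0 = 0 := by
          have hb : v₂ x * u₂ y0 = 0 := by
            linear_combination (-1 : k) * hst1 + 2 * w₂ y0 * hγ0 - v₂ y0 * hα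
          exact (mul_eq_zero.mp hb).resolve_left hβ
        have hs2 : u₂ y1 = 0 := by
          have hb : v₂ x * u₂ y1 = 0 := by
            linear_combination (-1 : k) * hst2 + 2 * w₂ y1 * hγ0 - v₂ y1 * hα
          exact (mul_eq_zero.mp hb).resolve_left hβ
        have hr1 : w₂ y0 = 0 := sq_eq_zero_iff.mp (by linear_combination hq1 + v₂ y0 * hs1)
        have hr2 : w₂ y1 = 0 := sq_eq_zero_iff.mp (by linear_combination hq2 + v₂ y1 * hs2)
        have : (1 : k) = 0 := by
          linear_combination hq12 - (w₂ y0 + w₂ y1) * (hr1 + hr2)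
            + (v₂ y0 + v₂ y1) * (hs1 + hs2)
        exact one_ne_zero this
    · by_cases hα : u₂ x = 0
      · exact ⟨hα, hβ, hγ0⟩
      · exfalso
        have ht1 : v₂ y0 = 0 := by
          have hb : u₂ x * v₂ y0 = 0 := by
            linear_combination (-1 : k) * hst1 + 2 * w₂ y0 * hγ0 - u₂ y0 * hβ
          exact (mul_eq_zero.mp hb).resolve_left hα
        have ht2 : v₂ y1 = 0 := by
          have hb : u₂ x * v₂ y1 = 0 := by
            linear_combination (-1 : k) * hst2 + 2 * w₂ y1 * hγ0 - u₂ y1 * hβ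
          exact (mul_eq_zero.mp hb).resolve_left hα
        have hr1 : w₂ y0 = 0 := sq_eq_zero_iff.mp (by linear_combination hq1 + u₂ y0 * ht1)
        have hr2 : w₂ y1 = 0 := sq_eq_zero_iff.mp (by linear_combination hq2 + u₂ y1 * ht2)
        have : (1 : k) = 0 := by
          linear_combination hq12 - (w₂ y0 + w₂ y1) * (hr1 + hr2)
            + (u₂ y0 + u₂ y1) * (ht1 + ht2)
        exact one_ne_zero this
  -- every linear form vanishing on the radical is expressed via u₁, v₁, w₁
  have key : ∀ f : V →ₗ[k] k, (∀ z, u₁ z = 0 → v₁ z = 0 → w₁ z = 0 → f z = 0) →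
      f = f y0 • u₁ + f y1 • v₁ + f y2 • w₁ := by
    intro f hf
    apply LinearMap.ext
    intro x
    have hz := hf (x - u₁ x • y0 - v₁ x • y1 - w₁ x • y2)
      (by simp only [map_sub, LinearMap.map_smul, smul_eq_mul, hu0, hu1, hu2']; ring)
      (by simp only [map_sub, LinearMap.map_smul, smul_eq_mul, hv0, hv1, hv2']; ring)
      (by simp only [map_sub, LinearMap.map_smul, smul_eq_mul, hw0, hw1, hw2']; ring)
    simp only [map_sub, LinearMap.map_smul, smul_eq_mul] at hz
    simp only [LinearMap.add_apply, LinearMap.smul_apply, smul_eq_mul]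
    linear_combination hz
  have hu₂ := key u₂ fun z h1 h2 h3 => (hK z h1 h2 h3).1
  have hv₂ := key v₂ fun z h1 h2 h3 => (hK z h1 h2 h3).2.1
  have hw₂ := key w₂ fun z h1 h2 h3 => (hK z h1 h2 h3).2.2
  -- the master quadratic identity in coordinates
  have H : ∀ a b c : k, c ^ 2 - a * b =
      (a * w₂ y0 + b * w₂ y1 + c * w₂ y2) ^ 2
        - (a * u₂ y0 + b * u₂ y1 + c * u₂ y2)
          * (a * v₂ y0 + b * v₂ y1 + c * v₂ y2) := by
    intro a b c
    have h := heq (a • y0 + b • y1 + c • y2)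
    simp only [map_add, LinearMap.map_smul, smul_eq_mul, hu0, hv0, hw0, hu1, hv1, hw1,
      hu2', hv2', hw2'] at h
    linear_combination h
  have E00 : w₂ y0 ^ 2 - u₂ y0 * v₂ y0 = 0 := by linear_combination -(H 1 0 0)
  have E11 : w₂ y1 ^ 2 - u₂ y1 * v₂ y1 = 0 := by linear_combination -(H 0 1 0)
  have E22 : w₂ y2 ^ 2 - u₂ y2 * v₂ y2 = 1 := by linear_combination -(H 0 0 1)
  have E01 : 2 * (w₂ y0 * w₂ y1) - u₂ y0 * v₂ y1 - u₂ y1 * v₂ y0 = -1 := by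
    linear_combination -(H 1 1 0) + H 1 0 0 + H 0 1 0
  have E02 : 2 * (w₂ y0 * w₂ y2) - u₂ y0 * v₂ y2 - u₂ y2 * v₂ y0 = 0 := by
    linear_combination -(H 1 0 1) + H 1 0 0 + H 0 0 1
  have E12 : 2 * (w₂ y1 * w₂ y2) - u₂ y1 * v₂ y2 - u₂ y2 * v₂ y1 = 0 := by
    linear_combination -(H 0 1 1) + H 0 1 0 + H 0 0 1
  refine ⟨!![u₂ y0, u₂ y1, u₂ y2; v₂ y0, v₂ y1, v₂ y2; w₂ y0, w₂ y1, w₂ y2], ?_, ?_, ?_, ?_⟩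
  · have hAT : (!![u₂ y0, u₂ y1, u₂ y2; v₂ y0, v₂ y1, v₂ y2; w₂ y0, w₂ y1, w₂ y2])ᵀ =
        !![u₂ y0, v₂ y0, w₂ y0; u₂ y1, v₂ y1, w₂ y1; u₂ y2, v₂ y2, w₂ y2] := by
      ext i j
      fin_cases i <;> fin_cases j <;> rfl
    rw [hAT, show Omega k = !![0, -(1/2), 0; -(1/2), 0, 0; 0, 0, 1] from rfl,
      Matrix.mul_fin_three, Matrix.mul_fin_three]
    refine congrArg Matrix.of (Matrix.vec3_eq (Matrix.vec3_eq ?_ ?_ ?_)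
      (Matrix.vec3_eq ?_ ?_ ?_) (Matrix.vec3_eq ?_ ?_ ?_)) <;> field_simp
    · linear_combination 2 * E00
    · linear_combination E01
    · linear_combination E02
    · linear_combination E01
    · linear_combination 2 * E11
    · linear_combination E12
    · linear_combination E02
    · linear_combination E12
    · linear_combination 2 * E22
  · exact hu₂
  · exact hv₂
  · exact hw₂
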